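/- Let v_1, …, v_n ∈ ℝ^d (n ≥ 1), let C be a real m×d matrix and δ ∈ ℝ^m with conv{v_1,…,v_n} = {x ∈ ℝ^d : Cx ≤ δ}, and assume each inequality is tight, i.e., for every i ∈ [m], δ_i = max{C_i·x : x ∈ conv{v_1,…,v_n}}. Let A be a real k×e matrix, b ∈ ℝ^k, and π : ℝ^e → ℝ^d a linear map such that the image π(Q) of the polyhedron Q := {y ∈ ℝ^e : Ay ≤ b} equals conv{v_1,…,v_n}. Then there exist an entrywise nonnegative m×k real matrix T and an entrywise nonnegative k×n real matrix U such that for all i ∈ [m], j ∈ [n], δ_i − C_i·v_j = (TU)_{ij}. -/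

import Mathlib

open Matrix

open Finset

variable {V : Type*} [AddCommGroup V] [Module ℝ V]

/-- Conic Carathéodory reduction step packaged as strong induction. -/
theorem cone_reduce {ι : Type*} [Fintype ι] [DecidableEq ι] (w : ι → V) :
    ∀ (s : Finset ι) (lam : ι → ℝ), (∀ i, 0 ≤ lam i) → (∀ i ∉ s, lam i = 0) →
    ∃ μ : ι → ℝ, (∀ i, 0 ≤ μ i) ∧ (∑ i, μ i • w i = ∑ i, lam i • w i) ∧
      LinearIndependent ℝ (fun i : {i // μ i ≠ 0} => w i) := by
  intro s
  induction s using Finset.strongInductionOn with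
  | _ s ih =>
    intro lam hpos hsupp
    by_cases hli : LinearIndependent ℝ (fun i : {i // lam i ≠ 0} => w i)
    · exact ⟨lam, hpos, rfl, hli⟩
    · obtain ⟨g, hg0, i₁, hi₁⟩ := Fintype.not_linearIndependent_iff.mp hli
      -- extend g to ι, possibly negated so as to have a positive entry
      obtain ⟨c, hcrel, hcsupp, i₂, hi₂⟩ :
          ∃ c : ι → ℝ, (∑ i, c i • w i = 0) ∧ (∀ i, lam i = 0 → c i = 0) ∧
            ∃ i, 0 < c i := by
        set c0 : ι → ℝ := fun i => if h : lam i ≠ 0 then g ⟨i, h⟩ else 0 with hc0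
        have hfil : ∀ x, x ∈ Finset.univ.filter (fun i => lam i ≠ 0) ↔ lam x ≠ 0 := by
          intro x; simp
        have hsum : ∑ i, c0 i • w i = 0 := by
          rw [← hg0]
          rw [← Finset.sum_filter_of_ne (p := fun i => lam i ≠ 0)
              (f := fun i => c0 i • w i)
              (by intro x _ hx; by_contra h; apply hx; simp [hc0, h])]
          rw [Finset.sum_subtype _ hfil (fun i => c0 i • w i)]
          apply Finset.sum_congr rfl
          intro a _
          congr 1
          simp [hc0, a.2]
        have hwsupp : ∀ i, lam i = 0 → c0 i = 0 := fun i h => by simp [hc0, h]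
        rcases lt_or_ge 0 (c0 i₁) with h | h
        · exact ⟨c0, hsum, hwsupp, i₁, h⟩
        · refine ⟨-c0, by simpa using hsum, fun i hi => by simp [hwsupp i hi], i₁, ?_⟩
          have : c0 (i₁ : ι) = g i₁ := by simp [hc0, i₁.2]
          simp only [Pi.neg_apply, neg_pos]
          rcases lt_or_eq_of_le h with h' | h'
          · exact h'
          · exact absurd (this.symm.trans h') hi₁
      obtain ⟨i₀, hi₀mem, hi₀min⟩ :=
        Finset.exists_min_image (Finset.univ.filter (fun i => 0 < c i))
          (fun i => lam i / c i) ⟨i₂, by simp [hi₂]⟩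
      simp only [Finset.mem_filter] at hi₀mem
      have hc₀pos : 0 < c i₀ := hi₀mem.2
      set t := lam i₀ / c i₀ with ht
      have ht0 : 0 ≤ t := div_nonneg (hpos i₀) hc₀pos.le
      set μ := fun i => lam i - t * c i with hμ
      have hμpos : ∀ i, 0 ≤ μ i := by
        intro i
        rcases le_or_gt (c i) 0 with h | h
        · have h2 : t * c i ≤ 0 := mul_nonpos_of_nonneg_of_nonpos ht0 h
          simp only [hμ]; linarith [hpos i]
        · have h2 : t * c i ≤ lam i :=
            (le_div_iff₀ h).mp (hi₀min i (by simp [h]))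
          simp only [hμ]; linarith
      have hlam₀ : lam i₀ ≠ 0 := fun h => absurd (hcsupp i₀ h) hc₀pos.ne'
      have hi₀s : i₀ ∈ s := by by_contra h; exact hlam₀ (hsupp i₀ h)
      have hsupp' : ∀ i ∉ s.erase i₀, μ i = 0 := by
        intro i hi
        rcases Decidable.em (i = i₀) with h | h
        · subst h
          simp only [hμ, ht]
          rw [div_mul_cancel₀ _ hc₀pos.ne', sub_self]
        · have : i ∉ s := fun hmem => hi (Finset.mem_erase.mpr ⟨h, hmem⟩)
          have h1 := hsupp i this
          simp [hμ, h1, hcsupp i h1]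
      have hsumeq : ∑ i, μ i • w i = ∑ i, lam i • w i := by
        have h1 : ∀ i, μ i • w i = lam i • w i - t • (c i • w i) := by
          intro i; simp [hμ, sub_smul, mul_smul]
        simp only [h1]
        rw [Finset.sum_sub_distrib, ← Finset.smul_sum, hcrel, smul_zero, sub_zero]
      obtain ⟨ν, hν, hsum', hli'⟩ :=
        ih (s.erase i₀) (Finset.erase_ssubset hi₀s) μ hμpos hsupp'
      exact ⟨ν, hν, hsum'.trans hsumeq, hli'⟩

theorem cone_isClosed {ι : Type*} [Fintype ι] [DecidableEq ι]
    {V : Type*} [NormedAddCommGroup V] [NormedSpace ℝ V] (w : ι → V) :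
    IsClosed {x : V | ∃ lam : ι → ℝ, (∀ i, 0 ≤ lam i) ∧ ∑ i, lam i • w i = x} := by
  have key : {x : V | ∃ lam : ι → ℝ, (∀ i, 0 ≤ lam i) ∧ ∑ i, lam i • w i = x}
      = ⋃ s ∈ {s : Finset ι | LinearIndependent ℝ (fun i : s => w i)},
          (Fintype.linearCombination ℝ (fun i : s => w (i : ι))) ''
            {lam : s → ℝ | ∀ i, 0 ≤ lam i} := by
    ext x
    simp only [Set.mem_setOf_eq, Set.mem_iUnion, Set.mem_image, exists_prop]
    constructor
    · rintro ⟨lam, hpos, hsum⟩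
      obtain ⟨μ, hμpos, hμsum, hμli⟩ := cone_reduce w Finset.univ lam hpos (by simp)
      set s : Finset ι := Finset.univ.filter (fun i => μ i ≠ 0) with hs
      have hmem : ∀ i : ι, i ∈ s ↔ μ i ≠ 0 := by intro i; simp [hs]
      refine ⟨s, ?_, fun i : s => μ i, fun i => hμpos i, ?_⟩
      · -- transfer linear independence along the equivalence of subtypes
        have heq : (fun i : {x // x ∈ s} => w (i : ι)) =
            (fun i : {i // μ i ≠ 0} => w (i : ι)) ∘
              (Equiv.subtypeEquivRight (fun i => (hmem i).symm)).symm := rfl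
        rw [heq]
        exact hμli.comp _ (Equiv.injective _)
      · rw [Fintype.linearCombination_apply, ← hsum, ← hμsum]
        rw [Finset.sum_coe_sort s (fun i => μ i • w i), hs]
        exact Finset.sum_filter_of_ne (by
          intro i _ hi
          by_contra h
          exact hi (by simp [h]))
    · rintro ⟨s, hsli, lam, hpos, hsum⟩
      classical
      refine ⟨fun i => if h : i ∈ s then lam ⟨i, h⟩ else 0, ?_, ?_⟩
      · intro i; by_cases h : i ∈ s <;> simp [h, hpos]
      · rw [← hsum, Fintype.linearCombination_apply]
        have h1 : ∀ i : s, lam i • w (i : ι) =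
            (if h : (i : ι) ∈ s then lam ⟨i, h⟩ else 0) • w (i : ι) := by
          intro i; rw [dif_pos i.2]
        rw [Finset.sum_congr rfl (fun i _ => h1 i)]
        rw [Finset.sum_coe_sort s (fun i => (if h : i ∈ s then lam ⟨i, h⟩ else 0) • w i)]
        exact (Finset.sum_subset (Finset.subset_univ s)
          (fun i _ hi => by simp [hi])).symm
  rw [key]
  apply Set.Finite.isClosed_biUnion (Set.toFinite _)
  intro s hs
  have hinj : LinearMap.ker (Fintype.linearCombination ℝ (fun i : s => w (i : ι))) = ⊥ := by
    rw [LinearMap.ker_eq_bot']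
    intro g hg
    rw [Fintype.linearCombination_apply] at hg
    funext i
    exact Fintype.linearIndependent_iff.mp hs g hg i
  have hclosed : IsClosed {lam : s → ℝ | ∀ i, 0 ≤ lam i} := by
    have : {lam : s → ℝ | ∀ i, 0 ≤ lam i} = ⋂ i, {lam : s → ℝ | 0 ≤ lam i} := by
      ext; simp
    rw [this]
    exact isClosed_iInter (fun i => isClosed_le continuous_const (continuous_apply i))
  exact ((Fintype.linearCombination ℝ
    (fun i : s => w (i : ι))).isClosedEmbedding_of_injective hinj).isClosedMap _ hclosed

theorem farkas_mem {ι : Type*} [Fintype ι] [DecidableEq ι]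
    {V : Type*} [NormedAddCommGroup V] [NormedSpace ℝ V] (w : ι → V) (x : V)
    (h : ∀ f : V →L[ℝ] ℝ, (∀ i, f (w i) ≤ 0) → f x ≤ 0) :
    ∃ lam : ι → ℝ, (∀ i, 0 ≤ lam i) ∧ ∑ i, lam i • w i = x := by
  set K := {x : V | ∃ lam : ι → ℝ, (∀ i, 0 ≤ lam i) ∧ ∑ i, lam i • w i = x} with hK
  by_contra hx
  have hxK : x ∉ K := hx
  have hconv : Convex ℝ K := by
    rintro p ⟨lp, hlp, hp⟩ q ⟨lq, hlq, hq⟩ a b ha hb hab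
    refine ⟨fun i => a * lp i + b * lq i,
      fun i => add_nonneg (mul_nonneg ha (hlp i)) (mul_nonneg hb (hlq i)), ?_⟩
    rw [← hp, ← hq]
    rw [Finset.smul_sum, Finset.smul_sum, ← Finset.sum_add_distrib]
    apply Finset.sum_congr rfl
    intro i _
    rw [add_smul, mul_smul, mul_smul]
  have hscale : ∀ z ∈ K, ∀ t : ℝ, 0 ≤ t → t • z ∈ K := by
    rintro z ⟨l, hl, hz⟩ t ht
    refine ⟨fun i => t * l i, fun i => mul_nonneg ht (hl i), ?_⟩
    rw [← hz, Finset.smul_sum]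
    exact Finset.sum_congr rfl fun i _ => mul_smul t (l i) (w i)
  obtain ⟨f, u, hfu, hux⟩ :=
    geometric_hahn_banach_closed_point hconv (cone_isClosed w) hxK
  have h0K : (0 : V) ∈ K := ⟨0, fun i => le_refl 0, by simp⟩
  have hu0 : 0 < u := by simpa using hfu 0 h0K
  have hfle : ∀ z ∈ K, f z ≤ 0 := by
    intro z hz
    by_contra hfz
    push_neg at hfz
    have := hfu ((u / f z) • z) (hscale z hz _ (div_nonneg hu0.le hfz.le))
    rw [_root_.map_smul, smul_eq_mul, div_mul_cancel₀ _ hfz.ne'] at this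
    exact lt_irrefl u this
  have hwK : ∀ i, w i ∈ K := by
    intro i
    refine ⟨fun j => if j = i then 1 else 0, fun j => by positivity, ?_⟩
    simp [ite_smul]
  have := h f (fun i => hfle _ (hwK i))
  linarith


/-- Yannakakis: an extension of the polytope `P = conv{v_1,…,v_n} = {x : Cx ≤ δ}`
described by `k` inequalities yields a rank-`k` nonnegative factorization of the
slack matrix `S_{ij} = δ_i − C_i · v_j`. -/
theorem stmt1 {n d m k e : ℕ} (hn : 1 ≤ n)
    (v : Fin n → (Fin d → ℝ))
    (C : Matrix (Fin m) (Fin d) ℝ) (δ : Fin m → ℝ)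
    (hP : convexHull ℝ (Set.range v) = {x : Fin d → ℝ | ∀ i, C.mulVec x i ≤ δ i})
    (htight : ∀ i, IsGreatest ((fun x => C i ⬝ᵥ x) '' convexHull ℝ (Set.range v)) (δ i))
    (A : Matrix (Fin k) (Fin e) ℝ) (b : Fin k → ℝ)
    (π : (Fin e → ℝ) →ₗ[ℝ] (Fin d → ℝ))
    (hQ : π '' {y : Fin e → ℝ | ∀ i, A.mulVec y i ≤ b i} = convexHull ℝ (Set.range v)) :
    ∃ (T : Matrix (Fin m) (Fin k) ℝ) (U : Matrix (Fin k) (Fin n) ℝ),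
      (∀ i ℓ, 0 ≤ T i ℓ) ∧ (∀ ℓ j, 0 ≤ U ℓ j) ∧
      ∀ i j, δ i - C i ⬝ᵥ v j = (T * U) i j := by
  classical
  set Q : Set (Fin e → ℝ) := {y : Fin e → ℝ | ∀ i, A.mulVec y i ≤ b i} with hQdef
  -- choose preimages of the vertices
  have huex : ∀ j, ∃ yj, yj ∈ Q ∧ π yj = v j := by
    intro j
    have hv : v j ∈ π '' Q := by
      rw [hQ]; exact subset_convexHull ℝ _ (Set.mem_range_self j)
    rcases hv with ⟨y, hy, hyv⟩
    exact ⟨y, hy, hyv⟩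
  choose u hu1 hu2 using huex
  -- validity of each inequality on Q, through π
  have hval : ∀ (i : Fin m), ∀ y ∈ Q, C i ⬝ᵥ π y ≤ δ i := by
    intro i y hy
    have h1 : π y ∈ convexHull ℝ (Set.range v) := by
      rw [← hQ]; exact Set.mem_image_of_mem _ hy
    rw [hP] at h1
    exact h1 i
  -- the key dual multipliers, for each row i
  have claim : ∀ i : Fin m, ∃ lam : Fin k → ℝ, (∀ ℓ, 0 ≤ lam ℓ) ∧
      (∀ y : Fin e → ℝ, C i ⬝ᵥ π y = ∑ ℓ, lam ℓ * (A ℓ ⬝ᵥ y)) ∧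
      (∑ ℓ, lam ℓ * b ℓ = δ i) := by
    intro i
    -- the linear functional y ↦ C i ⬝ᵥ π y
    set g : (Fin e → ℝ) →ₗ[ℝ] ℝ :=
      { toFun := fun y => C i ⬝ᵥ π y
        map_add' := fun y z => by simp [map_add, dotProduct_add]
        map_smul' := fun r y => by simp [_root_.map_smul, dotProduct_smul] } with hgdef
    have hg : ∀ y, g y = C i ⬝ᵥ π y := fun y => rfl
    set c : Fin e → ℝ := fun jj => g (fun j' => if jj = j' then 1 else 0) with hcdef
    have hc : ∀ y : Fin e → ℝ, g y = ∑ jj, y jj * c jj := by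
      intro y
      rw [LinearMap.pi_apply_eq_sum_univ g y]
      exact Finset.sum_congr rfl fun jj _ => by rw [smul_eq_mul]
      
    -- cone generators in (Fin e → ℝ) × ℝ
    set w : Option (Fin k) → (Fin e → ℝ) × ℝ := fun o =>
      Option.elim o ((0 : Fin e → ℝ), (1 : ℝ)) (fun ℓ => (A ℓ, b ℓ)) with hwdef
    have hfarkas : ∃ lam : Option (Fin k) → ℝ, (∀ o, 0 ≤ lam o) ∧
        ∑ o, lam o • w o = (c, δ i) := by
      apply farkas_mem
      intro f hw
      -- decompose f
      set yv : Fin e → ℝ :=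
        fun jj => f ((fun j' => if jj = j' then 1 else 0), 0) with hyvdef
      set β : ℝ := f (0, 1) with hβdef
      have hfdec : ∀ p : (Fin e → ℝ) × ℝ, f p = (∑ jj, p.1 jj * yv jj) + p.2 * β := by
        intro p
        have e1 : f p = f ((p.1, 0) : (Fin e → ℝ) × ℝ) + f ((0, p.2) : (Fin e → ℝ) × ℝ) := by
          rw [← map_add]
          congr 1
          ext <;> simp
        have e2 : f (((0 : Fin e → ℝ), p.2) : (Fin e → ℝ) × ℝ) = p.2 * β := by
          have h3 : (((0 : Fin e → ℝ), p.2) : (Fin e → ℝ) × ℝ)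
              = p.2 • ((0 : Fin e → ℝ), (1 : ℝ)) := by ext <;> simp
          rw [h3, _root_.map_smul, smul_eq_mul]
        have e3 : f ((p.1, (0 : ℝ)) : (Fin e → ℝ) × ℝ) = ∑ jj, p.1 jj * yv jj := by
          set g1 : (Fin e → ℝ) →ₗ[ℝ] ℝ :=
            (f.toLinearMap).comp (LinearMap.inl ℝ (Fin e → ℝ) ℝ) with hg1
          have h4 : f ((p.1, (0 : ℝ)) : (Fin e → ℝ) × ℝ) = g1 p.1 := rfl
          rw [h4, LinearMap.pi_apply_eq_sum_univ g1 p.1]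
          apply Finset.sum_congr rfl
          intro jj _
          rw [smul_eq_mul]
          rfl
        rw [e1, e2, e3]
      have hβ : β ≤ 0 := hw none
      have hA : ∀ ℓ, (A ℓ ⬝ᵥ yv) + b ℓ * β ≤ 0 := by
        intro ℓ
        have := hw (some ℓ)
        rw [show w (some ℓ) = (A ℓ, b ℓ) from rfl, hfdec] at this
        exact this
      -- the functional on the target
      rw [hfdec]
      have hgyv : (∑ jj, (c : Fin e → ℝ) jj * yv jj) = g yv := by
        rw [hc yv]
        exact Finset.sum_congr rfl fun jj _ => mul_comm _ _
      simp only
      rw [hgyv]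
      -- a feasible point
      have hy₀ : u ⟨0, hn⟩ ∈ Q := hu1 _
      rcases eq_or_lt_of_le hβ with hβ0 | hβneg
      · -- β = 0
        have hAyv : ∀ ℓ, A ℓ ⬝ᵥ yv ≤ 0 := by
          intro ℓ; have := hA ℓ; rw [hβ0] at this; linarith
        have hgyv0 : g yv ≤ 0 := by
          by_contra hpos
          push_neg at hpos
          set y₀ := u ⟨0, hn⟩ with hy₀def
          set t : ℝ := (δ i - g y₀ + 1) / g yv with ht
          have hgy₀ : g y₀ ≤ δ i := hval i y₀ hy₀
          have htpos : 0 < t := div_pos (by linarith) hpos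
          have hmem : y₀ + t • yv ∈ Q := by
            intro ℓ
            have h1 : A.mulVec (y₀ + t • yv) ℓ = A ℓ ⬝ᵥ y₀ + t * (A ℓ ⬝ᵥ yv) := by
              rw [Matrix.mulVec_add, Matrix.mulVec_smul]
              rfl
            have := hAyv ℓ
            have h2 := hy₀ ℓ
            rw [h1]
            have : t * (A ℓ ⬝ᵥ yv) ≤ 0 := mul_nonpos_of_nonneg_of_nonpos htpos.le this
            have h3 : A.mulVec y₀ ℓ = A ℓ ⬝ᵥ y₀ := rfl
            rw [h3] at h2
            linarith
          have := hval i _ hmem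
          rw [← hg, map_add, _root_.map_smul, smul_eq_mul, ht,
            div_mul_cancel₀ _ hpos.ne'] at this
          linarith
        rw [hβ0]
        linarith
      · -- β < 0
        have hβpos : 0 < -β := by linarith
        have hmem : (-β)⁻¹ • yv ∈ Q := by
          intro ℓ
          have h1 : A.mulVec ((-β)⁻¹ • yv) ℓ = (-β)⁻¹ * (A ℓ ⬝ᵥ yv) := by
            rw [Matrix.mulVec_smul]; rfl
          have h2 : A ℓ ⬝ᵥ yv ≤ b ℓ * (-β) := by have := hA ℓ; linarith
          rw [h1]
          calc (-β)⁻¹ * (A ℓ ⬝ᵥ yv) ≤ (-β)⁻¹ * (b ℓ * (-β)) := by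
                exact mul_le_mul_of_nonneg_left h2 (inv_nonneg.mpr hβpos.le)
            _ = b ℓ := by
                rw [mul_comm (b ℓ), ← mul_assoc, inv_mul_cancel₀ hβpos.ne', one_mul]
        have := hval i _ hmem
        rw [← hg, _root_.map_smul, smul_eq_mul] at this
        have h4 : g yv ≤ δ i * (-β) := by
          have := mul_le_mul_of_nonneg_left this hβpos.le
          rw [← mul_assoc, mul_inv_cancel₀ hβpos.ne', one_mul] at this
          linarith [this]
        nlinarith
    obtain ⟨lam, hlampos, hlamsum⟩ := hfarkas
    have hsum1 : (∑ o, lam o • w o).1 = c := by rw [hlamsum]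
    have hsum2 : (∑ o, lam o • w o).2 = δ i := by rw [hlamsum]
    rw [Fintype.sum_option] at hsum1 hsum2
    simp only [hwdef, Option.elim, smul_zero, Prod.fst_add, Prod.snd_add, Prod.fst_sum,
      Prod.snd_sum, Prod.smul_mk, smul_eq_mul, mul_one] at hsum1 hsum2
    set lam' : Fin k → ℝ := fun ℓ => lam (some ℓ) with hlam'
    have hcrep : ∀ jj, c jj = ∑ ℓ, lam' ℓ * A ℓ jj := by
      intro jj
      rw [← hsum1]
      simp [Finset.sum_apply, hlam']
    have hrep : ∀ y : Fin e → ℝ, C i ⬝ᵥ π y = ∑ ℓ, lam' ℓ * (A ℓ ⬝ᵥ y) := by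
      intro y
      calc C i ⬝ᵥ π y = ∑ jj, y jj * c jj := hc y
        _ = ∑ jj, ∑ ℓ, y jj * (lam' ℓ * A ℓ jj) := by
            apply Finset.sum_congr rfl
            intro jj _
            rw [hcrep jj, Finset.mul_sum]
        _ = ∑ ℓ, ∑ jj, y jj * (lam' ℓ * A ℓ jj) := Finset.sum_comm
        _ = ∑ ℓ, lam' ℓ * (A ℓ ⬝ᵥ y) := by
            apply Finset.sum_congr rfl
            intro ℓ _
            rw [dotProduct, Finset.mul_sum]
            apply Finset.sum_congr rfl
            intro jj _
            ring
    refine ⟨lam', fun ℓ => hlampos _, hrep, ?_⟩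
    obtain ⟨xstar, hxconv, hxeq⟩ := (htight i).1
    obtain ⟨ustar, hust, hueq⟩ : ∃ yy, yy ∈ Q ∧ π yy = xstar := by
      have hx : xstar ∈ π '' Q := by rw [hQ]; exact hxconv
      rcases hx with ⟨yy, h1, h2⟩
      exact ⟨yy, h1, h2⟩
    have h5 : δ i = ∑ ℓ, lam' ℓ * (A ℓ ⬝ᵥ ustar) := by
      rw [← hxeq]
      simp only
      rw [← hueq, hrep ustar]
    have h6 : ∑ ℓ, lam' ℓ * (A ℓ ⬝ᵥ ustar) ≤ ∑ ℓ, lam' ℓ * b ℓ := by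
      apply Finset.sum_le_sum
      intro ℓ _
      exact mul_le_mul_of_nonneg_left (hust ℓ) (hlampos _)
    have h8 : 0 ≤ lam none := hlampos none
    linarith [hsum2]
  choose lam hlampos hlamrep hlamb using claim
  refine ⟨fun i ℓ => lam i ℓ, fun ℓ j => b ℓ - A.mulVec (u j) ℓ,
    fun i ℓ => hlampos i ℓ, fun ℓ j => sub_nonneg.mpr (hu1 j ℓ), ?_⟩
  intro i j
  change _ = ∑ ℓ, lam i ℓ * (b ℓ - A.mulVec (u j) ℓ)
  have hterm : ∀ ℓ, lam i ℓ * (b ℓ - A.mulVec (u j) ℓ)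
      = lam i ℓ * b ℓ - lam i ℓ * (A ℓ ⬝ᵥ u j) := by
    intro ℓ
    rw [mul_sub]
    rfl
  calc δ i - C i ⬝ᵥ v j = δ i - C i ⬝ᵥ π (u j) := by rw [hu2]
    _ = (∑ ℓ, lam i ℓ * b ℓ) - ∑ ℓ, lam i ℓ * (A ℓ ⬝ᵥ u j) := by
        rw [hlamb i, hlamrep i (u j)]
    _ = ∑ ℓ, (lam i ℓ * b ℓ - lam i ℓ * (A ℓ ⬝ᵥ u j)) := (Finset.sum_sub_distrib _ _).symm
    _ = ∑ ℓ, lam i ℓ * (b ℓ - A.mulVec (u j) ℓ) := by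
        exact Finset.sum_congr rfl fun ℓ _ => (hterm ℓ).symm
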